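/- arXiv:2603.24091 — 5 statements merged into one kernel-verified Lean document; each statement's English description precedes it below -/
import Mathlib

section
/- Let n ≥ 1, let f : ℝⁿ × ℝⁿ → ℝ be continuously differentiable, let K ⊆ ℝⁿ be a nonempty compact set, and define F : ℝⁿ → ℝ by F(x) = min_{y ∈ K} f(x, y). If F is differentiable at a point x, then for any y_x ∈ K with f(x, y_x) = F(x) one has ‖∇F(x)‖ ≤ ‖∇_x f(x, y_x)‖, where ∇_x f(x, y_x) denotes the gradient of the map z ↦ f(z, y_x) at z = x. -/
/-- Lemma 6.2 (weak Danskin): if `F x = min_{y ∈ K} f (x, y)` is differentiable at `x`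
and the minimum is attained at `yₓ ∈ K`, then `‖∇F(x)‖ ≤ ‖∇ₓ f(x, yₓ)‖`. -/
theorem stmt_1 (n : ℕ) (hn : 1 ≤ n)
    (f : EuclideanSpace ℝ (Fin n) × EuclideanSpace ℝ (Fin n) → ℝ)
    (hf : ContDiff ℝ 1 f)
    (K : Set (EuclideanSpace ℝ (Fin n))) (hK : IsCompact K) (hKne : K.Nonempty)
    (F : EuclideanSpace ℝ (Fin n) → ℝ)
    (hF : ∀ x, F x = sInf ((fun y => f (x, y)) '' K))
    (x : EuclideanSpace ℝ (Fin n)) (hFx : DifferentiableAt ℝ F x)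
    (yx : EuclideanSpace ℝ (Fin n)) (hyx : yx ∈ K) (hmin : f (x, yx) = F x) :
    ‖gradient F x‖ ≤ ‖gradient (fun z => f (z, yx)) x‖ := by
  set g : EuclideanSpace ℝ (Fin n) → ℝ := fun z => f (z, yx) with hg
  have hgd : DifferentiableAt ℝ g x := by
    exact (hf.differentiable one_ne_zero (x, yx)).comp x
      (differentiableAt_id.prodMk (differentiableAt_const yx))
  have hle : ∀ z, F z ≤ g z := by
    intro z
    rw [hF z]
    apply csInf_le
    · exact (hK.image (hf.continuous.comp (Continuous.prodMk_right z))).bddBelow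
    · exact ⟨yx, hyx, rfl⟩
  have hmin' : IsLocalMin (fun z => g z - F z) x := by
    apply Filter.Eventually.of_forall
    intro z
    have h1 : g x - F x = 0 := by simp [hg, hmin]
    have h2 : (0:ℝ) ≤ g z - F z := sub_nonneg.mpr (hle z)
    simpa [h1] using h2
  have hderiv : fderiv ℝ (fun z => g z - F z) x = fderiv ℝ g x - fderiv ℝ F x :=
    fderiv_sub hgd hFx
  have hzero : fderiv ℝ (fun z => g z - F z) x = 0 := hmin'.fderiv_eq_zero
  have heq : fderiv ℝ F x = fderiv ℝ g x := by
    have := hderiv.symm.trans hzero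
    rwa [sub_eq_zero, eq_comm] at this
  have : gradient F x = gradient g x := by
    simp only [gradient, heq]
  rw [this]
end

section
/- Let n ≥ 1 be an integer. For δ > 0 define ψ_δ : ℝⁿ × [−1/(4n), 0] → ℝ by ψ_δ(x, t) = (t + 1/(4n) + δ)^{−n/2} · exp(−‖x‖²/(4(t + 1/(4n) + δ))) − e^{−8n}·t − e^{−8n}·(1/(4n) + δ)^{−n/2}. Then there exists δ₀ ∈ (0, 1/(4n)] such that for all δ ∈ (0, δ₀]: (i) ψ_δ(x, t) < 0 whenever ‖x‖ = 4 and −1/(4n) ≤ t ≤ 0; and (ii) ψ_δ(x, −1/(4n)) < 0 whenever 1/32 ≤ ‖x‖ ≤ 4. -/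
private lemma mono_aux (n : ℕ) {s S : ℝ} (hs : 0 < s) (hss : s ≤ S) (h8 : (n : ℝ) * S ≤ 8) :
    s ^ (-(n : ℝ) / 2) * Real.exp (-4 / s) ≤ S ^ (-(n : ℝ) / 2) * Real.exp (-4 / S) := by
  have hS : 0 < S := lt_of_lt_of_le hs hss
  have hA : 0 < s ^ (-(n : ℝ) / 2) * Real.exp (-4 / s) := by positivity
  have hB : 0 < S ^ (-(n : ℝ) / 2) * Real.exp (-4 / S) := by positivity
  rw [← Real.log_le_log_iff hA hB,
    Real.log_mul (by positivity) (Real.exp_ne_zero _),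
    Real.log_mul (by positivity) (Real.exp_ne_zero _),
    Real.log_rpow hs, Real.log_rpow hS, Real.log_exp, Real.log_exp]
  have hlog : Real.log S - Real.log s ≤ S / s - 1 := by
    rw [← Real.log_div hS.ne' hs.ne']
    exact Real.log_le_sub_one_of_pos (by positivity)
  have key : ((n : ℝ) / 2) * (S / s - 1) ≤ 4 / s - 4 / S := by
    have h1 : ((n : ℝ) / 2) * (S / s - 1) = ((n : ℝ) * (S - s)) / (2 * s) := by
      field_simp
      try ring
    have h2 : 4 / s - 4 / S = (4 * (S - s)) / (s * S) := by
      field_simp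
      try ring
    rw [h1, h2, div_le_div_iff₀ (by positivity) (by positivity)]
    nlinarith [mul_le_mul_of_nonneg_right h8 (mul_nonneg (sub_nonneg.2 hss) hs.le), hs.le,
      sub_nonneg.2 hss]
  have hn2 : (0 : ℝ) ≤ (n : ℝ) / 2 := by positivity
  have h5 : ((n : ℝ) / 2) * (Real.log S - Real.log s) ≤ 4 / s - 4 / S :=
    le_trans (mul_le_mul_of_nonneg_left hlog hn2) key
  ring_nf at h5 ⊢
  linarith

set_option maxHeartbeats 1000000 in
/-- Negativity of the barrier (formula (eq:macro-2) in the proof of Lemma 4.4):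
there is `δ₀ ∈ (0, 1/(4n)]` such that for all `δ ∈ (0, δ₀]` the function `ψ_δ` is
negative on the lateral boundary `‖x‖ = 4`, `-1/(4n) ≤ t ≤ 0`, and on the initial
annulus `1/32 ≤ ‖x‖ ≤ 4`, `t = -1/(4n)`. -/
theorem stmt_6 (n : ℕ) (hn : 1 ≤ n) :
    ∃ δ₀ : ℝ, 0 < δ₀ ∧ δ₀ ≤ 1 / (4 * (n : ℝ)) ∧
      ∀ δ : ℝ, 0 < δ → δ ≤ δ₀ →
        (∀ (x : EuclideanSpace ℝ (Fin n)) (t : ℝ), ‖x‖ = 4 →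
            -(1 / (4 * (n : ℝ))) ≤ t → t ≤ 0 →
          (t + 1 / (4 * (n : ℝ)) + δ) ^ (-(n : ℝ) / 2) *
              Real.exp (-‖x‖ ^ 2 / (4 * (t + 1 / (4 * (n : ℝ)) + δ)))
            - Real.exp (-8 * (n : ℝ)) * t
            - Real.exp (-8 * (n : ℝ)) * (1 / (4 * (n : ℝ)) + δ) ^ (-(n : ℝ) / 2) < 0) ∧
        (∀ x : EuclideanSpace ℝ (Fin n), 1 / 32 ≤ ‖x‖ → ‖x‖ ≤ 4 →
          (-(1 / (4 * (n : ℝ))) + 1 / (4 * (n : ℝ)) + δ) ^ (-(n : ℝ) / 2) *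
              Real.exp (-‖x‖ ^ 2 / (4 * (-(1 / (4 * (n : ℝ))) + 1 / (4 * (n : ℝ)) + δ)))
            - Real.exp (-8 * (n : ℝ)) * (-(1 / (4 * (n : ℝ))))
            - Real.exp (-8 * (n : ℝ)) * (1 / (4 * (n : ℝ)) + δ) ^ (-(n : ℝ) / 2) < 0) := by
  have hN : (1 : ℝ) ≤ (n : ℝ) := by exact_mod_cast hn
  have hNpos : (0 : ℝ) < (n : ℝ) := by linarith
  set E8 : ℝ := Real.exp 8 with hE8def
  have hE8 : (9 : ℝ) ≤ E8 := by have := Real.add_one_le_exp (8 : ℝ); linarith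
  have hE8pos : (0 : ℝ) < E8 := Real.exp_pos 8
  set y : ℝ := 1 / (8192 * (n : ℝ) * E8) with hydef
  have hy : 0 < y := by positivity
  have hy2 : y ^ 2 ≤ 1 / (4 * (n : ℝ)) := by
    rw [hydef, div_pow, one_pow, div_le_div_iff₀ (by positivity) (by positivity)]
    nlinarith [sq_nonneg ((n : ℝ) * E8), mul_le_mul hN hE8 (by norm_num) hNpos.le]
  refine ⟨y ^ 2, by positivity, hy2, ?_⟩
  intro δ hδ hδ₀
  have hNy2 : (n : ℝ) * y ^ 2 ≤ 1 / 100 := by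
    rw [hydef, div_pow, one_pow, ← mul_div_assoc, mul_one,
      div_le_div_iff₀ (by positivity) (by norm_num)]
    nlinarith [mul_le_mul hN hE8 (by norm_num) hNpos.le,
      mul_le_mul hN hN (by norm_num) hNpos.le, sq_nonneg ((n : ℝ) * E8)]
  have hNδ : (n : ℝ) * δ ≤ 1 / 100 :=
    le_trans (by nlinarith) hNy2
  have hδsmall : δ ≤ 1 / 100 := by nlinarith
  have hApos : (0 : ℝ) < 1 / (4 * (n : ℝ)) := by positivity
  have hAle : 1 / (4 * (n : ℝ)) ≤ 1 / 4 := by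
    rw [div_le_div_iff₀ (by positivity) (by norm_num)]; nlinarith
  set S : ℝ := 1 / (4 * (n : ℝ)) + δ with hSdef
  have hSpos : 0 < S := by positivity
  have hS1 : S ≤ 1 := by rw [hSdef]; linarith
  have hPexp : -(n : ℝ) / 2 ≤ 0 := by
    have : (0 : ℝ) ≤ (n : ℝ) / 2 := by positivity
    linarith
  have hP1 : 1 ≤ S ^ (-(n : ℝ) / 2) :=
    Real.one_le_rpow_of_pos_of_le_one_of_nonpos hSpos hS1 hPexp
  have hE : (0 : ℝ) < Real.exp (-8 * (n : ℝ)) := Real.exp_pos _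
  have hNA : (n : ℝ) * (1 / (4 * (n : ℝ))) = 1 / 4 := by
    field_simp
    try ring
  constructor
  · -- lateral boundary
    intro x t hx ht1 ht2
    have hspos : 0 < t + 1 / (4 * (n : ℝ)) + δ := by linarith
    have hsle : t + 1 / (4 * (n : ℝ)) + δ ≤ S := by rw [hSdef]; linarith
    have harg : -‖x‖ ^ 2 / (4 * (t + 1 / (4 * (n : ℝ)) + δ)) =
        -4 / (t + 1 / (4 * (n : ℝ)) + δ) := by
      rw [hx]
      rw [div_eq_div_iff (by positivity) (by positivity)]
      ring
    rw [harg]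
    have h8 : (n : ℝ) * S ≤ 8 := by
      rw [hSdef, mul_add, hNA]; linarith
    have hmain := mono_aux n hspos hsle h8
    have h42 : (8 * (n : ℝ) + 2) * S ≤ 4 := by
      rw [hSdef]
      have hexpand : (8 * (n : ℝ) + 2) * (1 / (4 * (n : ℝ)) + δ) =
          8 * ((n : ℝ) * (1 / (4 * (n : ℝ)))) + 2 * (1 / (4 * (n : ℝ)))
            + 8 * ((n : ℝ) * δ) + 2 * δ := by ring
      rw [hexpand, hNA]
      linarith
    have hexpS : Real.exp (-4 / S) ≤ Real.exp (-2) * Real.exp (-8 * (n : ℝ)) := by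
      rw [← Real.exp_add]
      apply Real.exp_le_exp.2
      have h1 : (8 * (n : ℝ) + 2) ≤ 4 / S := (le_div_iff₀ hSpos).2 (by linarith)
      have h2 : -4 / S = -(4 / S) := by ring
      rw [h2]
      linarith
    have hSP : (0 : ℝ) ≤ S ^ (-(n : ℝ) / 2) := by positivity
    have hchain : (t + 1 / (4 * (n : ℝ)) + δ) ^ (-(n : ℝ) / 2) *
        Real.exp (-4 / (t + 1 / (4 * (n : ℝ)) + δ)) ≤
        S ^ (-(n : ℝ) / 2) * (Real.exp (-2) * Real.exp (-8 * (n : ℝ))) :=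
      le_trans hmain (mul_le_mul_of_nonneg_left hexpS hSP)
    have he2 : Real.exp (-2 : ℝ) ≤ 1 / 3 := by
      have h3 : (3 : ℝ) ≤ Real.exp 2 := by have := Real.add_one_le_exp (2 : ℝ); linarith
      have hmul : Real.exp (-2 : ℝ) * Real.exp 2 = 1 := by
        rw [← Real.exp_add]; norm_num
      have h4 := mul_le_mul_of_nonneg_left h3 (Real.exp_pos (-2 : ℝ)).le
      linarith
    have htE : -(Real.exp (-8 * (n : ℝ)) * t) ≤ Real.exp (-8 * (n : ℝ)) * (1 / 4) := by
      have hmt : -t ≤ 1 / 4 := by linarith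
      have h4 := mul_le_mul_of_nonneg_left hmt hE.le
      linarith
    have hPE := mul_le_mul_of_nonneg_left hP1 hE.le
    have hstep := mul_le_mul_of_nonneg_left he2 (mul_nonneg hSP hE.le)
    linarith [hchain, hPE, hstep, htE, hE]
  · -- initial annulus
    intro x hx1 hx2
    have hsimp : -(1 / (4 * (n : ℝ))) + 1 / (4 * (n : ℝ)) + δ = δ := by ring
    rw [hsimp]
    set u : ℝ := 1 / (4096 * δ) with hudef
    have hu : 0 < u := by positivity
    have hr2 : (1 / 1024 : ℝ) ≤ ‖x‖ ^ 2 := by nlinarith [norm_nonneg x]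
    have hexp1 : Real.exp (-‖x‖ ^ 2 / (4 * δ)) ≤ Real.exp (-u) := by
      apply Real.exp_le_exp.2
      rw [hudef, neg_div, neg_le_neg_iff, div_le_div_iff₀ (by positivity) (by positivity)]
      nlinarith
    have hfac : u ^ n ≤ Real.exp u * (Nat.factorial n : ℝ) := by
      have h := Real.pow_div_factorial_le_exp u hu.le n
      rw [div_le_iff₀ (by positivity)] at h
      exact h
    have hexpu : Real.exp (-u) ≤ (Nat.factorial n : ℝ) * (4096 * δ) ^ n := by
      have hinv : (4096 * δ) = u⁻¹ := by
        rw [hudef]; field_simp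
      rw [Real.exp_neg, hinv, inv_le_iff_one_le_mul₀ (Real.exp_pos u)]
      calc (1 : ℝ) = (u⁻¹) ^ n * u ^ n := by
            rw [← mul_pow, inv_mul_cancel₀ hu.ne', one_pow]
        _ ≤ (u⁻¹) ^ n * (Real.exp u * (Nat.factorial n : ℝ)) :=
            mul_le_mul_of_nonneg_left hfac (by positivity)
        _ = (Nat.factorial n : ℝ) * (u⁻¹) ^ n * Real.exp u := by ring
    have hδP : (0 : ℝ) ≤ δ ^ (-(n : ℝ) / 2) := by positivity
    have hδhalf : δ ^ (-(n : ℝ) / 2) * δ ^ n = δ ^ ((n : ℝ) / 2) := by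
      rw [← Real.rpow_natCast δ n, ← Real.rpow_add hδ]
      ring_nf
    have hyδ : δ ^ ((n : ℝ) / 2) ≤ y ^ n := by
      calc δ ^ ((n : ℝ) / 2) ≤ (y ^ 2) ^ ((n : ℝ) / 2) :=
            Real.rpow_le_rpow hδ.le hδ₀ (by positivity)
        _ = y ^ n := by
            rw [← Real.rpow_natCast y 2, ← Real.rpow_mul hy.le, ← Real.rpow_natCast y n]
            congr 1
            ring
    have hsplit : ((1 : ℝ) / (2 * E8)) ^ n = (1 / 2 : ℝ) ^ n * (1 / E8) ^ n := by
      rw [← mul_pow]; congr 1; ring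
    have hE8n : ((1 : ℝ) / E8) ^ n = Real.exp (-8 * (n : ℝ)) := by
      rw [hE8def, one_div, ← Real.exp_neg, ← Real.exp_nat_mul]
      congr 1; ring
    have hkey : δ ^ (-(n : ℝ) / 2) * Real.exp (-u) ≤ (1 / 2) * Real.exp (-8 * (n : ℝ)) := by
      calc δ ^ (-(n : ℝ) / 2) * Real.exp (-u)
          ≤ δ ^ (-(n : ℝ) / 2) * ((Nat.factorial n : ℝ) * (4096 * δ) ^ n) :=
            mul_le_mul_of_nonneg_left hexpu hδP
        _ ≤ δ ^ (-(n : ℝ) / 2) * (((n : ℝ)) ^ n * (4096 * δ) ^ n) := by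
            apply mul_le_mul_of_nonneg_left _ hδP
            apply mul_le_mul_of_nonneg_right _ (by positivity)
            exact_mod_cast Nat.factorial_le_pow n
        _ = (4096 * (n : ℝ)) ^ n * (δ ^ (-(n : ℝ) / 2) * δ ^ n) := by
            rw [mul_pow, mul_pow]; ring
        _ = (4096 * (n : ℝ)) ^ n * δ ^ ((n : ℝ) / 2) := by rw [hδhalf]
        _ ≤ (4096 * (n : ℝ)) ^ n * y ^ n :=
            mul_le_mul_of_nonneg_left hyδ (by positivity)
        _ = (4096 * (n : ℝ) * y) ^ n := by rw [← mul_pow]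
        _ = ((1 : ℝ) / (2 * E8)) ^ n := by
            have hbase : 4096 * (n : ℝ) * y = 1 / (2 * E8) := by
              rw [hydef]
              field_simp
              ring
            rw [hbase]
        _ = (1 / 2 : ℝ) ^ n * Real.exp (-8 * (n : ℝ)) := by rw [hsplit, hE8n]
        _ ≤ (1 / 2) * Real.exp (-8 * (n : ℝ)) := by
            apply mul_le_mul_of_nonneg_right _ hE.le
            calc ((1 : ℝ) / 2) ^ n ≤ (1 / 2 : ℝ) ^ 1 :=
                  pow_le_pow_of_le_one (by norm_num) (by norm_num) hn
              _ = 1 / 2 := pow_one _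
    have hterm : δ ^ (-(n : ℝ) / 2) * Real.exp (-‖x‖ ^ 2 / (4 * δ)) ≤
        (1 / 2) * Real.exp (-8 * (n : ℝ)) :=
      le_trans (mul_le_mul_of_nonneg_left hexp1 hδP) hkey
    have hPE := mul_le_mul_of_nonneg_left hP1 hE.le
    have hEA := mul_le_mul_of_nonneg_left hAle hE.le
    linarith [hterm, hPE, hEA, hE]
end

section
/- Let n ≥ 1 be an integer and let σ ∈ (0, 1/(8n)). For every δ > 0 define ψ_δ(x, t) = (t + 1/(4n) + δ)^{−n/2} · exp(−‖x‖²/(4(t + 1/(4n) + δ))) − e^{−8n}·t − e^{−8n}·(1/(4n) + δ)^{−n/2}. Then for every δ > 0 and every (x, t) with ‖x‖ ≤ 2 and −σ ≤ t ≤ 0, one has ψ_δ(x, t) > 0. -/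
/-- Positivity of the barrier (formula (eq:macro-3) in the proof of Lemma 4.4):
for `σ ∈ (0, 1/(8n))` and every `δ > 0`, the function `ψ_δ` is positive on
`‖x‖ ≤ 2`, `-σ ≤ t ≤ 0`. -/
theorem stmt_7 (n : ℕ) (hn : 1 ≤ n) (σ : ℝ) (hσ₀ : 0 < σ) (hσ₁ : σ < 1 / (8 * (n : ℝ))) :
    ∀ δ : ℝ, 0 < δ →
      ∀ (x : EuclideanSpace ℝ (Fin n)) (t : ℝ), ‖x‖ ≤ 2 → -σ ≤ t → t ≤ 0 →
        0 < (t + 1 / (4 * (n : ℝ)) + δ) ^ (-(n : ℝ) / 2) *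
              Real.exp (-‖x‖ ^ 2 / (4 * (t + 1 / (4 * (n : ℝ)) + δ)))
            - Real.exp (-8 * (n : ℝ)) * t
            - Real.exp (-8 * (n : ℝ)) * (1 / (4 * (n : ℝ)) + δ) ^ (-(n : ℝ) / 2) := by
  intro δ hδ x t hx hσt ht0
  have hn' : (1:ℝ) ≤ n := by exact_mod_cast hn
  have hnpos : (0:ℝ) < n := by linarith
  set s : ℝ := t + 1 / (4 * (n : ℝ)) + δ with hsdef
  have hA : (0:ℝ) < 1 / (4 * (n:ℝ)) + δ := by positivity
  have hhalf : 1 / (4 * (n:ℝ)) = 2 * (1 / (8 * (n:ℝ))) := by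
    field_simp; ring
  have hslb : 1 / (8 * (n:ℝ)) < s := by
    rw [hsdef, hhalf]; linarith
  have hspos : (0:ℝ) < s := lt_trans (by positivity) hslb
  have hsle : s ≤ 1 / (4 * (n:ℝ)) + δ := by rw [hsdef]; linarith
  have h1 : (1 / (4 * (n:ℝ)) + δ) ^ (-(n:ℝ)/2) ≤ s ^ (-(n:ℝ)/2) :=
    Real.rpow_le_rpow_of_nonpos hspos hsle (by linarith)
  have hq : ‖x‖ ^ 2 / (4 * s) < 8 * (n:ℝ) := by
    rw [div_lt_iff₀ (by positivity)]
    have hx2 : ‖x‖ ^ 2 ≤ 4 := by nlinarith [norm_nonneg x]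
    have h8 : (8 * (n:ℝ)) * (1 / (8 * (n:ℝ))) = 1 := by field_simp
    have h9 : (1:ℝ) < 8 * (n:ℝ) * s := by
      have := mul_lt_mul_of_pos_left hslb (show (0:ℝ) < 8 * (n:ℝ) by positivity)
      rwa [h8] at this
    nlinarith [h9, hx2]
  have h2 : Real.exp (-8 * (n:ℝ)) < Real.exp (-‖x‖ ^ 2 / (4 * s)) := by
    apply Real.exp_lt_exp.mpr
    rw [neg_div]
    linarith
  have key : (1 / (4 * (n:ℝ)) + δ) ^ (-(n:ℝ)/2) * Real.exp (-8 * (n:ℝ))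
      < s ^ (-(n:ℝ)/2) * Real.exp (-‖x‖ ^ 2 / (4 * s)) :=
    mul_lt_mul' h1 h2 (Real.exp_pos _).le (by positivity)
  have ht : Real.exp (-8 * (n:ℝ)) * t ≤ 0 :=
    mul_nonpos_of_nonneg_of_nonpos (Real.exp_pos _).le ht0
  nlinarith [key, ht]
end

section
/- Let n ≥ 1, let x, y₁ ∈ ℝⁿ, let R > 0 and 0 < ρ ≤ R, and assume ‖x − y₁‖ < R. Then there exists y₂ ∈ ℝⁿ with ‖y₂ − x‖ ≤ ρ such that the open ball B_{ρ/16}(y₂) is contained in B_{3ρ/8}(x) ∩ B_{R − ρ/4}(y₁). Moreover, for any t_k ∈ ℝ, setting t₁ = t_k + R², every pair (ỹ, t̃) with ỹ ∈ B_{ρ/16}(y₂) and ρ²/4 − ρ²/256 < t̃ − t_k ≤ ρ²/4 satisfies ‖ỹ − x‖² < t̃ − t_k < ρ² and ‖ỹ − y₁‖² < t₁ − t̃. -/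
lemma stmt_9_aux (n : ℕ) (x y₁ y₂ : EuclideanSpace ℝ (Fin n)) (R ρ : ℝ)
    (hρ₀ : 0 < ρ) (hρR : ρ ≤ R)
    (h1 : ‖y₂ - x‖ ≤ 5 * ρ / 16) (h2 : ‖y₂ - y₁‖ < R - 5 * ρ / 16) :
      Metric.ball y₂ (ρ / 16) ⊆ Metric.ball x (3 * ρ / 8) ∩ Metric.ball y₁ (R - ρ / 4) ∧
      ∀ (tk : ℝ) (ytil : EuclideanSpace ℝ (Fin n)) (ttil : ℝ),
        ytil ∈ Metric.ball y₂ (ρ / 16) →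
        ρ ^ 2 / 4 - ρ ^ 2 / 256 < ttil - tk → ttil - tk ≤ ρ ^ 2 / 4 →
        ‖ytil - x‖ ^ 2 < ttil - tk ∧ ttil - tk < ρ ^ 2 ∧
          ‖ytil - y₁‖ ^ 2 < (tk + R ^ 2) - ttil := by
  have key : ∀ z : EuclideanSpace ℝ (Fin n), z ∈ Metric.ball y₂ (ρ / 16) →
      ‖z - x‖ < 3 * ρ / 8 ∧ ‖z - y₁‖ < R - ρ / 4 := by
    intro z hz
    rw [Metric.mem_ball, dist_eq_norm] at hz
    have hx : ‖z - x‖ ≤ ‖z - y₂‖ + ‖y₂ - x‖ := norm_sub_le_norm_sub_add_norm_sub _ _ _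
    have hy : ‖z - y₁‖ ≤ ‖z - y₂‖ + ‖y₂ - y₁‖ := norm_sub_le_norm_sub_add_norm_sub _ _ _
    constructor <;> linarith
  constructor
  · intro z hz
    obtain ⟨ha, hb⟩ := key z hz
    exact ⟨Metric.mem_ball.2 (by rwa [dist_eq_norm]), Metric.mem_ball.2 (by rwa [dist_eq_norm])⟩
  · intro tk ytil ttil hmem hlo hhi
    obtain ⟨ha, hb⟩ := key ytil hmem
    have hna : (0:ℝ) ≤ ‖ytil - x‖ := norm_nonneg _
    have hnb : (0:ℝ) ≤ ‖ytil - y₁‖ := norm_nonneg _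
    refine ⟨?_, ?_, ?_⟩
    · nlinarith
    · nlinarith
    · nlinarith

/-- Geometric inclusion (formulas (eq:weak-harnack-2), (eq:weak-harnack-3)) from the
proof of the weak Harnack inequality (Proposition 4.6). -/
theorem stmt_9 (n : ℕ) (hn : 1 ≤ n)
    (x y₁ : EuclideanSpace ℝ (Fin n)) (R ρ : ℝ)
    (hR : 0 < R) (hρ₀ : 0 < ρ) (hρR : ρ ≤ R) (hxy : ‖x - y₁‖ < R) :
    ∃ y₂ : EuclideanSpace ℝ (Fin n), ‖y₂ - x‖ ≤ ρ ∧
      Metric.ball y₂ (ρ / 16) ⊆ Metric.ball x (3 * ρ / 8) ∩ Metric.ball y₁ (R - ρ / 4) ∧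
      ∀ (tk : ℝ) (ytil : EuclideanSpace ℝ (Fin n)) (ttil : ℝ),
        ytil ∈ Metric.ball y₂ (ρ / 16) →
        ρ ^ 2 / 4 - ρ ^ 2 / 256 < ttil - tk → ttil - tk ≤ ρ ^ 2 / 4 →
        ‖ytil - x‖ ^ 2 < ttil - tk ∧ ttil - tk < ρ ^ 2 ∧
          ‖ytil - y₁‖ ^ 2 < (tk + R ^ 2) - ttil := by
  by_cases hcase : ‖x - y₁‖ < R - 5 * ρ / 16
  · refine ⟨x, by simp [hρ₀.le], ?_⟩
    exact stmt_9_aux n x y₁ x R ρ hρ₀ hρR (by simp; positivity) (by simpa using hcase)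
  · push_neg at hcase
    set d : ℝ := ‖x - y₁‖ with hd
    have hd0 : 0 < d := by nlinarith
    set c : ℝ := 5 * ρ / (16 * d) with hc
    have hc0 : 0 < c := by positivity
    have hcd : c * d = 5 * ρ / 16 := by rw [hc, div_mul_eq_mul_div, div_eq_div_iff (mul_pos (by norm_num) hd0).ne' (by norm_num)]; ring
    have hc1 : c ≤ 1 := by
      rw [hc, div_le_one (by positivity)]; nlinarith
    refine ⟨x + c • (y₁ - x), ?_, ?_⟩
    · have : (x + c • (y₁ - x)) - x = c • (y₁ - x) := by abel
      rw [this, norm_smul, Real.norm_eq_abs, abs_of_pos hc0, norm_sub_rev, ← hd, hcd]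
      nlinarith
    · apply stmt_9_aux n x y₁ _ R ρ hρ₀ hρR
      · have : (x + c • (y₁ - x)) - x = c • (y₁ - x) := by abel
        rw [this, norm_smul, Real.norm_eq_abs, abs_of_pos hc0, norm_sub_rev, ← hd, hcd]
      · have : (x + c • (y₁ - x)) - y₁ = (1 - c) • (x - y₁) := by
          module
        rw [this, norm_smul, Real.norm_eq_abs, abs_of_nonneg (by linarith), ← hd]
        nlinarith
end

section
/- Let n ≥ 1 and let u, v : ℝⁿ → ℝ be continuously differentiable. Define d : ℝⁿ → ℝ by d(x) = inf_{y ∈ ℝⁿ} √(‖x − y‖² + (u(x) − v(y))²). Suppose that at a point x the function d is differentiable, d(x) > 0, and the infimum is attained at some y ∈ ℝⁿ. Then ‖∇d(x)‖ ≤ ‖∇u(x) − ∇v(y)‖. -/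
set_option maxHeartbeats 1000000

open RealInnerProductSpace

/-- Gradient bound for the distance between two graphs (formula (eq:final-reg-6),
Step 3 of the proof of Proposition 6.4). -/
theorem stmt_10 (n : ℕ) (hn : 1 ≤ n)
    (u v : EuclideanSpace ℝ (Fin n) → ℝ) (hu : ContDiff ℝ 1 u) (hv : ContDiff ℝ 1 v)
    (d : EuclideanSpace ℝ (Fin n) → ℝ)
    (hd : ∀ x, d x = ⨅ y : EuclideanSpace ℝ (Fin n),
      Real.sqrt (‖x - y‖ ^ 2 + (u x - v y) ^ 2))
    (x : EuclideanSpace ℝ (Fin n)) (hdx : DifferentiableAt ℝ d x) (hpos : 0 < d x)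
    (y : EuclideanSpace ℝ (Fin n))
    (hy : Real.sqrt (‖x - y‖ ^ 2 + (u x - v y) ^ 2) = d x) :
    ‖gradient d x‖ ≤ ‖gradient u x - gradient v y‖ := by
  have hud : Differentiable ℝ u := hu.differentiable one_ne_zero
  have hvd : Differentiable ℝ v := hv.differentiable one_ne_zero
  set c : ℝ := u x - v y with hc
  set s : ℝ := d x with hs
  have hspos : 0 < s := hpos
  have hs2 : ‖x - y‖ ^ 2 + c ^ 2 = s ^ 2 := by
    rw [← hy, Real.sq_sqrt (by positivity)]
  have hbdd : ∀ z : EuclideanSpace ℝ (Fin n),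
      BddBelow (Set.range fun w => Real.sqrt (‖z - w‖ ^ 2 + (u z - v w) ^ 2)) :=
    fun z => ⟨0, by rintro a ⟨w, rfl⟩; exact Real.sqrt_nonneg _⟩
  have hle : ∀ z w, d z ≤ Real.sqrt (‖z - w‖ ^ 2 + (u z - v w) ^ 2) := by
    intro z w; rw [hd z]; exact ciInf_le (hbdd z) w
  -- notation for gradients
  set Gu : EuclideanSpace ℝ (Fin n) := gradient u x with hGu
  set Gv : EuclideanSpace ℝ (Fin n) := gradient v y with hGv
  have hGuh : ∀ h, fderiv ℝ u x h = ⟪Gu, h⟫ := by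
    intro h
    rw [hGu]; exact (InnerProductSpace.toDual_symm_apply).symm
  have hGvh : ∀ h, fderiv ℝ v y h = ⟪Gv, h⟫ := by
    intro h
    rw [hGv]; exact (InnerProductSpace.toDual_symm_apply).symm
  -- Step A : first order condition at the minimizer y
  have h1 : HasFDerivAt (fun w : EuclideanSpace ℝ (Fin n) => x - w)
      (-(ContinuousLinearMap.id ℝ (EuclideanSpace ℝ (Fin n)))) y :=
    (hasFDerivAt_id y).const_sub x
  have h2 := h1.inner ℝ h1
  have hcs : HasFDerivAt (fun w => u x - v w) (-(fderiv ℝ v y)) y :=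
    ((hvd y).hasFDerivAt).const_sub (u x)
  have h3 : HasFDerivAt (fun w => (u x - v w) ^ 2)
      ((u x - v y) • (-(fderiv ℝ v y)) + (u x - v y) • (-(fderiv ℝ v y))) y := by
    have := hcs.mul hcs
    simpa [pow_two, Pi.mul_def] using this
  have hgmin : IsLocalMin
      (fun w => ⟪x - w, x - w⟫ + (u x - v w) ^ 2) y := by
    apply Filter.Eventually.of_forall
    intro w
    have h1' : ⟪x - y, x - y⟫ + (u x - v y) ^ 2 = s ^ 2 := by
      rw [real_inner_self_eq_norm_sq]; exact hs2
    have h2' : s ≤ Real.sqrt (‖x - w‖ ^ 2 + (u x - v w) ^ 2) := hs ▸ hle x w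
    have h3' : s ^ 2 ≤ ‖x - w‖ ^ 2 + (u x - v w) ^ 2 := by
      have := pow_le_pow_left₀ hspos.le h2' 2
      rwa [Real.sq_sqrt (by positivity)] at this
    show ⟪x - y, x - y⟫ + (u x - v y) ^ 2 ≤ ⟪x - w, x - w⟫ + (u x - v w) ^ 2
    rw [h1', real_inner_self_eq_norm_sq]
    linarith
  have hFOC := hgmin.hasFDerivAt_eq_zero (h2.add h3)
  -- pointwise form of the first order condition
  have hfoc : ∀ h, ⟪x - y, h⟫ = -(c * ⟪Gv, h⟫) := by
    intro h
    have := congrFun (congrArg (fun (L : _ →L[ℝ] ℝ) => (L : _ → ℝ)) hFOC) h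
    simp only [ContinuousLinearMap.add_apply, ContinuousLinearMap.comp_apply,
      ContinuousLinearMap.prod_apply, ContinuousLinearMap.neg_apply,
      ContinuousLinearMap.coe_id', id_eq, fderivInnerCLM_apply,
      ContinuousLinearMap.smul_apply, ContinuousLinearMap.zero_apply,
      smul_eq_mul] at this
    rw [hGvh] at this
    have hcomm : ⟪(-h : EuclideanSpace ℝ (Fin n)), x - y⟫ = ⟪x - y, -h⟫ :=
      real_inner_comm _ _
    rw [hcomm, inner_neg_right] at this
    rw [← hc] at this
    linarith
  -- Step B : derivative of the majorant at x
  have h4 : HasFDerivAt (fun z : EuclideanSpace ℝ (Fin n) => z - y)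
      (ContinuousLinearMap.id ℝ (EuclideanSpace ℝ (Fin n))) x := by
    simpa using (hasFDerivAt_id x).sub_const y
  have h5 := h4.inner ℝ h4
  have hus : HasFDerivAt (fun z => u z - v y) (fderiv ℝ u x) x := by
    simpa using ((hud x).hasFDerivAt).sub_const (v y)
  have h6 : HasFDerivAt (fun z => (u z - v y) ^ 2)
      ((u x - v y) • (fderiv ℝ u x) + (u x - v y) • (fderiv ℝ u x)) x := by
    have := hus.mul hus
    simpa [pow_two, Pi.mul_def] using this
  have h7 := h5.add h6
  set q : ℝ := ⟪x - y, x - y⟫ + (u x - v y) ^ 2 with hq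
  have hqs : q = s ^ 2 := by rw [hq, real_inner_self_eq_norm_sq]; exact hs2
  have hqne : q ≠ 0 := by rw [hqs]; positivity
  have hsqrt : HasDerivAt Real.sqrt (1 / (2 * Real.sqrt q)) q :=
    Real.hasDerivAt_sqrt hqne
  have h8 := hsqrt.comp_hasFDerivAt x h7
  -- the majorant minus d has a local min at x
  have hfmin : IsLocalMin
      (fun z => (Real.sqrt ∘ fun z => ⟪z - y, z - y⟫ + (u z - v y) ^ 2) z - d z) x := by
    apply Filter.Eventually.of_forall
    intro z
    have h1' : d z ≤ Real.sqrt (⟪z - y, z - y⟫ + (u z - v y) ^ 2) := by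
      rw [real_inner_self_eq_norm_sq]; exact hle z y
    have h2' : Real.sqrt (⟪x - y, x - y⟫ + (u x - v y) ^ 2) = s := by
      rw [real_inner_self_eq_norm_sq]; exact hy
    simp only [Function.comp_apply]
    rw [h2']
    simp only [← hs, sub_self]
    linarith
  have hD := hfmin.hasFDerivAt_eq_zero (h8.sub hdx.hasFDerivAt)
  have hDd : fderiv ℝ d x =
      (1 / (2 * Real.sqrt q)) • ((fderivInnerCLM ℝ (x - y, x - y)).comp
        ((ContinuousLinearMap.id ℝ (EuclideanSpace ℝ (Fin n))).prod
          (ContinuousLinearMap.id ℝ (EuclideanSpace ℝ (Fin n)))) +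
        ((u x - v y) • (fderiv ℝ u x) + (u x - v y) • (fderiv ℝ u x))) := by
    have := sub_eq_zero.mp hD
    exact this.symm
  have hsqrtq : Real.sqrt q = s := by rw [hqs, Real.sqrt_sq hspos.le]
  -- compute the gradient of d
  have hgrad : gradient d x = (c / s) • (Gu - Gv) := by
    apply ext_inner_right ℝ
    intro h
    have hL : ⟪gradient d x, h⟫ = fderiv ℝ d x h := by
      exact InnerProductSpace.toDual_symm_apply
    rw [hL, hDd]
    simp only [ContinuousLinearMap.smul_apply, ContinuousLinearMap.add_apply,
      ContinuousLinearMap.comp_apply, ContinuousLinearMap.prod_apply,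
      ContinuousLinearMap.coe_id', id_eq, fderivInnerCLM_apply, smul_eq_mul]
    rw [hGuh, hsqrtq]
    have hcomm : ⟪h, x - y⟫ = ⟪x - y, h⟫ := real_inner_comm _ _
    rw [hcomm, hfoc h]
    rw [inner_smul_left, inner_sub_left]
    rw [← hc]
    have : (c / s) * (⟪Gu, h⟫ - ⟪Gv, h⟫) =
        1 / (2 * s) * (-(c * ⟪Gv, h⟫) + -(c * ⟪Gv, h⟫) + (c * ⟪Gu, h⟫ + c * ⟪Gu, h⟫)) := by
      field_simp
      ring
    simp only [RCLike.conj_to_real] at *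
    linarith [this]
  -- conclude
  rw [hgrad, norm_smul, Real.norm_eq_abs]
  have hcle : |c| ≤ s := by
    have h1' : c ^ 2 ≤ s ^ 2 := by linarith [hs2, sq_nonneg ‖x - y‖]
    have := Real.sqrt_le_sqrt h1'
    rwa [Real.sqrt_sq_eq_abs, Real.sqrt_sq hspos.le] at this
  have : |c / s| ≤ 1 := by
    rw [abs_div, abs_of_pos hspos]
    exact div_le_one_of_le₀ hcle hspos.le
  calc |c / s| * ‖Gu - Gv‖ ≤ 1 * ‖Gu - Gv‖ := by
        exact mul_le_mul_of_nonneg_right this (norm_nonneg _)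
    _ = ‖Gu - Gv‖ := one_mul _
end
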